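/- Let X and Y be finite simple graphs. Then ϑ̄⁺(X * Y) ≤ ϑ̄⁺(X)·ϑ̄⁺(Y), where for a graph Z, ϑ̄⁺(Z) is the infimum of t ∈ ℝ such that there exists a doubly nonnegative matrix N indexed by V(Z) with N_{z,z} = t for all z, N_{z,z'} = 0 whenever z is adjacent to z' in Z, and N − J positive semidefinite (J the all-ones matrix). -/

import Mathlib

open Matrix

/-- A real matrix is completely positive if it equals `Pᵀ * P`
for some entrywise nonnegative real matrix `P`. -/
def IsCP {ι : Type*} (H : Matrix ι ι ℝ) : Prop :=
  ∃ (n : ℕ) (P : Matrix (Fin n) ι ℝ), (∀ i j, 0 ≤ P i j) ∧ H = Pᵀ * P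

/-- A real matrix indexed by `ι` is completely positive semidefinite if it is the Gram
matrix of real positive semidefinite `d × d` matrices for some `d ≥ 1`. -/
def IsCPSD {ι : Type*} (H : Matrix ι ι ℝ) : Prop :=
  ∃ d : ℕ, 0 < d ∧ ∃ ρ : ι → Matrix (Fin d) (Fin d) ℝ,
    (∀ i, (ρ i).PosSemidef) ∧ ∀ i j, H i j = (ρ i * ρ j).trace

/-- A real matrix is doubly nonnegative if it is positive semidefinite
and entrywise nonnegative. -/
def IsDNN {ι : Type*} [Fintype ι] (H : Matrix ι ι ℝ) : Prop :=
  H.PosSemidef ∧ ∀ i j, 0 ≤ H i j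

section Aux

open scoped Kronecker

variable {ι κ : Type*} [Fintype ι] [Fintype κ]

lemma psd_kron {A : Matrix ι ι ℝ} {B : Matrix κ κ ℝ}
    (hA : A.PosSemidef) (hB : B.PosSemidef) : (A ⊗ₖ B).PosSemidef := by
  classical
  exact hA.kronecker hB

lemma psd_J : (Matrix.of fun _ _ => (1 : ℝ) : Matrix ι ι ℝ).PosSemidef := by
  rw [Matrix.posSemidef_iff_dotProduct_mulVec]
  constructor
  · ext i j
    simp [Matrix.conjTranspose_apply]
  · intro x
    have h : (Matrix.of fun _ _ => (1 : ℝ) : Matrix ι ι ℝ) *ᵥ x = fun _ => ∑ j, x j := by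
      ext i
      simp [Matrix.mulVec, dotProduct]
    rw [h]
    have : star x ⬝ᵥ (fun _ => ∑ j, x j) = (∑ j, x j) ^ 2 := by
      simp [dotProduct, ← Finset.sum_mul, sq]
    rw [this]
    positivity

lemma psd_smul {c : ℝ} (hc : 0 ≤ c) {M : Matrix ι ι ℝ} (hM : M.PosSemidef) :
    (c • M).PosSemidef := by
  refine Matrix.posSemidef_iff_dotProduct_mulVec.mpr ⟨?_, fun x => ?_⟩
  · ext i j
    simp only [Matrix.conjTranspose_apply, Matrix.smul_apply, star_trivial]
    rw [show M j i = M i j by simpa using hM.1.apply i j]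
  · rw [Matrix.smul_mulVec, dotProduct_smul]
    exact mul_nonneg hc (hM.dotProduct_mulVec_nonneg x)

/-- `card • 1` is a feasible matrix for any graph. -/
lemma card_feasible (Z : SimpleGraph ι) :
    ∃ N : Matrix ι ι ℝ, IsDNN N ∧ (∀ z, N z z = (Fintype.card ι : ℝ)) ∧
      (∀ z z', Z.Adj z z' → N z z' = 0) ∧
      (N - Matrix.of fun _ _ => (1 : ℝ)).PosSemidef := by
  classical
  refine ⟨(Fintype.card ι : ℝ) • 1, ⟨psd_smul (by positivity) Matrix.PosSemidef.one, ?_⟩,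
    ?_, ?_, ?_⟩
  · intro i j
    by_cases h : i = j <;> simp [Matrix.one_apply, h]
  · intro z
    simp
  · intro z z' h
    simp [Matrix.one_apply, h.ne]
  · refine Matrix.posSemidef_iff_dotProduct_mulVec.mpr ⟨?_, fun x => ?_⟩
    · ext i j
      by_cases h : i = j <;> simp [Matrix.conjTranspose_apply, Matrix.one_apply, h, eq_comm]
    · have h : ∀ i, (((Fintype.card ι : ℝ) • 1 - Matrix.of fun _ _ => (1 : ℝ)) *ᵥ x) i
          = (Fintype.card ι : ℝ) * x i - ∑ j, x j := by
        intro i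
        simp [Matrix.sub_mulVec, Matrix.mulVec, dotProduct, Matrix.one_apply,
          sub_mul, Finset.sum_sub_distrib, ite_mul, Finset.sum_ite_eq, Finset.mul_sum]
      have h2 : star x ⬝ᵥ (((Fintype.card ι : ℝ) • 1 - Matrix.of fun _ _ => (1 : ℝ)) *ᵥ x)
          = (Fintype.card ι : ℝ) * ∑ i, x i ^ 2 - (∑ i, x i) ^ 2 := by
        simp only [dotProduct, Pi.star_apply, star_trivial, h]
        have e : ∀ i, x i * ((Fintype.card ι : ℝ) * x i - ∑ j, x j)
            = (Fintype.card ι : ℝ) * x i ^ 2 - x i * ∑ j, x j := fun i => by ring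
        simp_rw [e]
        rw [Finset.sum_sub_distrib, ← Finset.mul_sum, ← Finset.sum_mul, sq]
      rw [h2, sub_nonneg]
      have := sq_sum_le_card_mul_sum_sq (s := Finset.univ) (f := x)
      simpa using this

end Aux

/-- Schrijver's theta `ϑ⁻(Z)`: optimize over doubly nonnegative matrices. -/
noncomputable def thetaMinus {γ : Type*} [Fintype γ] (Z : SimpleGraph γ) : ℝ :=
  sSup {r : ℝ | ∃ M : Matrix γ γ ℝ, IsDNN M ∧ M.trace = 1 ∧
    (∀ z z', Z.Adj z z' → M z z' = 0) ∧ r = ∑ z, ∑ z', M z z'}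

/-- Szegedy's theta of the complement, `ϑ̄⁺(Z) = Θ^{DNN}(Z)`. -/
noncomputable def thetaBarPlus {γ : Type*} [Fintype γ] (Z : SimpleGraph γ) : ℝ :=
  sInf {t : ℝ | ∃ N : Matrix γ γ ℝ, IsDNN N ∧ (∀ z, N z z = t) ∧
    (∀ z z', Z.Adj z z' → N z z' = 0) ∧
    (N - Matrix.of fun _ _ => (1 : ℝ)).PosSemidef}

/-- The lexicographic product `X[Y]`. -/
def lexProd {α β : Type*} (X : SimpleGraph α) (Y : SimpleGraph β) :
    SimpleGraph (α × β) where
  Adj p q := X.Adj p.1 q.1 ∨ (p.1 = q.1 ∧ Y.Adj p.2 q.2)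
  symm := by
    constructor
    rintro ⟨x, y⟩ ⟨x', y'⟩ (h | ⟨h1, h2⟩)
    · exact Or.inl h.symm
    · exact Or.inr ⟨h1.symm, h2.symm⟩
  loopless := by
    constructor
    rintro ⟨x, y⟩ (h | ⟨_, h⟩) <;> exact h.ne rfl

/-- The disjunctive product `X * Y`. -/
def disjProd {α β : Type*} (X : SimpleGraph α) (Y : SimpleGraph β) :
    SimpleGraph (α × β) where
  Adj p q := X.Adj p.1 q.1 ∨ Y.Adj p.2 q.2
  symm := by
    constructor
    rintro ⟨x, y⟩ ⟨x', y'⟩ (h | h)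
    · exact Or.inl h.symm
    · exact Or.inr h.symm
  loopless := by
    constructor
    rintro ⟨x, y⟩ (h | h) <;> exact h.ne rfl

section Main

open scoped Kronecker

/-- The feasible set in the definition of `thetaBarPlus`. -/
def feasSet {γ : Type*} [Fintype γ] (Z : SimpleGraph γ) : Set ℝ :=
  {t : ℝ | ∃ N : Matrix γ γ ℝ, IsDNN N ∧ (∀ z, N z z = t) ∧
    (∀ z z', Z.Adj z z' → N z z' = 0) ∧
    (N - Matrix.of fun _ _ => (1 : ℝ)).PosSemidef}

lemma thetaBarPlus_eq_sInf {γ : Type*} [Fintype γ] (Z : SimpleGraph γ) :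
    thetaBarPlus Z = sInf (feasSet Z) := rfl

lemma feasSet_nonempty {γ : Type*} [Fintype γ] (Z : SimpleGraph γ) :
    (feasSet Z).Nonempty :=
  ⟨(Fintype.card γ : ℝ), card_feasible Z⟩

lemma feasSet_lb {γ : Type*} [Fintype γ] [Nonempty γ] (Z : SimpleGraph γ) :
    ∀ t ∈ feasSet Z, (1 : ℝ) ≤ t := by
  classical
  rintro t ⟨N, hN, hd, -, hJ⟩
  obtain ⟨z⟩ := ‹Nonempty γ›
  set M : Matrix γ γ ℝ := N - Matrix.of fun _ _ => (1 : ℝ) with hM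
  have h0 : (0 : ℝ) ≤ M z z := by
    have := hJ.dotProduct_mulVec_nonneg (Pi.single z 1)
    simpa [dotProduct, Matrix.mulVec, Pi.single_apply, ← hM] using this
  have h1 : M z z = t - 1 := by
    simp [hM, Matrix.sub_apply, hd z]
  linarith

lemma psd_of_isEmpty {γ : Type*} [Fintype γ] [IsEmpty γ] (M : Matrix γ γ ℝ) :
    M.PosSemidef := by
  refine Matrix.posSemidef_iff_dotProduct_mulVec.mpr ⟨?_, fun x => ?_⟩
  · ext i j
    exact isEmptyElim i
  · simp [dotProduct]

lemma feasSet_univ_of_isEmpty {γ : Type*} [Fintype γ] [IsEmpty γ] (Z : SimpleGraph γ) :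
    feasSet Z = Set.univ := by
  ext t
  refine ⟨fun _ => trivial, fun _ => ⟨0, ⟨psd_of_isEmpty _, fun i => isEmptyElim i⟩,
    fun z => isEmptyElim z, fun z => isEmptyElim z, psd_of_isEmpty _⟩⟩

lemma sInf_univ_real : sInf (Set.univ : Set ℝ) = 0 := by
  have h : ¬BddBelow (Set.univ : Set ℝ) := by
    rintro ⟨c, hc⟩
    have := hc (Set.mem_univ (c - 1))
    linarith
  rw [csInf_of_not_bddBelow h, Real.sInf_empty]

lemma mul_mem_feasSet {α β : Type*} [Fintype α] [Fintype β]
    {X : SimpleGraph α} {Y : SimpleGraph β} {a b : ℝ}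
    (ha : a ∈ feasSet X) (hb : b ∈ feasSet Y) : a * b ∈ feasSet (disjProd X Y) := by
  obtain ⟨N₁, hN₁, hd₁, hz₁, hJ₁⟩ := ha
  obtain ⟨N₂, hN₂, hd₂, hz₂, hJ₂⟩ := hb
  refine ⟨N₁ ⊗ₖ N₂, ⟨psd_kron hN₁.1 hN₂.1, ?_⟩, ?_, ?_, ?_⟩
  · rintro ⟨x, y⟩ ⟨x', y'⟩
    exact mul_nonneg (hN₁.2 x x') (hN₂.2 y y')
  · rintro ⟨x, y⟩
    simp [Matrix.kroneckerMap_apply, hd₁ x, hd₂ y]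
  · rintro ⟨x, y⟩ ⟨x', y'⟩ (h | h)
    · simp [Matrix.kroneckerMap_apply, hz₁ x x' h]
    · simp [Matrix.kroneckerMap_apply, hz₂ y y' h]
  · have key : N₁ ⊗ₖ N₂ - (Matrix.of fun _ _ => (1 : ℝ)) =
        (N₁ - Matrix.of fun _ _ => (1 : ℝ)) ⊗ₖ N₂ +
        (Matrix.of fun _ _ => (1 : ℝ) : Matrix α α ℝ) ⊗ₖ (N₂ - Matrix.of fun _ _ => (1 : ℝ)) := by
      ext ⟨x, y⟩ ⟨x', y'⟩
      simp only [Matrix.sub_apply, Matrix.add_apply, Matrix.kroneckerMap_apply, Matrix.of_apply]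
      ring
    rw [key]
    exact (psd_kron hJ₁ hN₂.1).add (psd_kron psd_J hJ₂)

end Main

theorem stmt_15 {α β : Type*} [Fintype α] [Fintype β]
    (X : SimpleGraph α) (Y : SimpleGraph β) :
    thetaBarPlus (disjProd X Y) ≤ thetaBarPlus X * thetaBarPlus Y := by
  rcases isEmpty_or_nonempty α with hα | hα
  · rw [thetaBarPlus_eq_sInf, feasSet_univ_of_isEmpty, sInf_univ_real,
      thetaBarPlus_eq_sInf X, feasSet_univ_of_isEmpty, sInf_univ_real, zero_mul]
  rcases isEmpty_or_nonempty β with hβ | hβ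
  · rw [thetaBarPlus_eq_sInf, feasSet_univ_of_isEmpty, sInf_univ_real,
      thetaBarPlus_eq_sInf Y, feasSet_univ_of_isEmpty, sInf_univ_real, mul_zero]
  have hbdd : BddBelow (feasSet (disjProd X Y)) := ⟨1, fun t ht => feasSet_lb _ t ht⟩
  have hY1 : (1 : ℝ) ≤ thetaBarPlus Y := le_csInf (feasSet_nonempty Y) (feasSet_lb Y)
  have step1 : ∀ a ∈ feasSet X, thetaBarPlus (disjProd X Y) ≤ a * thetaBarPlus Y := by
    intro a ha
    have ha1 : (1 : ℝ) ≤ a := feasSet_lb X a ha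
    have h : thetaBarPlus (disjProd X Y) / a ≤ thetaBarPlus Y := by
      refine le_csInf (feasSet_nonempty Y) fun b hb => ?_
      rw [div_le_iff₀ (by linarith)]
      rw [mul_comm]
      exact csInf_le hbdd (mul_mem_feasSet ha hb)
    rw [div_le_iff₀ (by linarith)] at h
    linarith [h]
  have h2 : thetaBarPlus (disjProd X Y) / thetaBarPlus Y ≤ thetaBarPlus X := by
    refine le_csInf (feasSet_nonempty X) fun a ha => ?_
    rw [div_le_iff₀ (by linarith)]
    exact step1 a ha
  rw [div_le_iff₀ (by linarith)] at h2
  linarith [h2]
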